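/- Entropy balance equation for a confined reservoir: in the Setup, the decrease of system entropy ΔS = S(ρ_i) − S(ρ_U), the entropy production σ = S(ω_U | ρ_U ⊗ ν_i) and the reservoir energy increase ΔQ = tr(ν_U H_R) − tr(ν_i H_R) satisfy ΔS + σ = β·ΔQ. -/

import Mathlib

open Matrix Kronecker ComplexOrder

/-- Logarithm of a matrix, defined via the spectral theorem for Hermitian matrices
(junk value `0` on non-Hermitian matrices).  Since `Real.log 0 = 0`, for a positive
semidefinite matrix this is the logarithm taken on the support, with the convention
`log 0 = 0` on the kernel. -/
noncomputable def mlog {n : Type*} [Fintype n] [DecidableEq n] (A : Matrix n n ℂ) :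
    Matrix n n ℂ :=
  if hA : A.IsHermitian then
    (hA.eigenvectorUnitary : Matrix n n ℂ) *
      Matrix.diagonal (fun i => (Real.log (hA.eigenvalues i) : ℂ)) *
      (star hA.eigenvectorUnitary : Matrix n n ℂ)
  else 0

/-- von Neumann entropy `S(ρ) = -tr(ρ log ρ)`. -/
noncomputable def vnEnt {n : Type*} [Fintype n] [DecidableEq n] (ρ : Matrix n n ℂ) : ℝ :=
  -(Matrix.trace (ρ * mlog ρ)).re

/-- Relative entropy `S(ζ₁|ζ₂) = tr(ζ₁ (log ζ₁ - log ζ₂))`. -/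
noncomputable def relEnt {n : Type*} [Fintype n] [DecidableEq n] (ζ₁ ζ₂ : Matrix n n ℂ) : ℝ :=
  (Matrix.trace (ζ₁ * (mlog ζ₁ - mlog ζ₂))).re

/-- A density matrix: positive semidefinite with unit trace. -/
def IsDensityMatrix {n : Type*} [Fintype n] [DecidableEq n] (ρ : Matrix n n ℂ) : Prop :=
  ρ.PosSemidef ∧ ρ.trace = 1

/-- Partial trace over the reservoir (second) factor:
`(tr_R M)_{ij} = Σ_k M_{(i,k),(j,k)}`. -/
noncomputable def ptraceR {dS dR : ℕ} (M : Matrix (Fin dS × Fin dR) (Fin dS × Fin dR) ℂ) :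
    Matrix (Fin dS) (Fin dS) ℂ :=
  Matrix.of fun i j => ∑ k, M (i, k) (j, k)

/-- Partial trace over the system (first) factor:
`(tr_S M)_{kl} = Σ_i M_{(i,k),(i,l)}`. -/
noncomputable def ptraceS {dS dR : ℕ} (M : Matrix (Fin dS × Fin dR) (Fin dS × Fin dR) ℂ) :
    Matrix (Fin dR) (Fin dR) ℂ :=
  Matrix.of fun k l => ∑ i, M (i, k) (i, l)

/-- The Gibbs state `e^{-βH}/tr(e^{-βH})` at inverse temperature `β`. -/
noncomputable def gibbs {dR : ℕ} (β : ℝ) (H : Matrix (Fin dR) (Fin dR) ℂ) :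
    Matrix (Fin dR) (Fin dR) ℂ :=
  (Matrix.trace (NormedSpace.exp ((-β : ℂ) • H)))⁻¹ • NormedSpace.exp ((-β : ℂ) • H)

/-- The trace norm `‖X‖₁ = tr((X*X)^{1/2})`. -/
noncomputable def traceNorm {n : Type*} [Fintype n] [DecidableEq n] (X : Matrix n n ℂ) : ℝ :=
  (Matrix.trace
    (((Matrix.posSemidef_conjTranspose_mul_self X).1.eigenvectorUnitary : Matrix n n ℂ) *
      Matrix.diagonal (fun i => ((√((Matrix.posSemidef_conjTranspose_mul_self X).1.eigenvalues i) : ℝ) : ℂ)) *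
      (star (Matrix.posSemidef_conjTranspose_mul_self X).1.eigenvectorUnitary : Matrix n n ℂ))).re

section auxlem
open Polynomial
variable {n : Type*} [Fintype n] [DecidableEq n]

lemma diag_const_smul (a : ℂ) :
    Matrix.diagonal ((algebraMap ℂ (n → ℂ)) a) = a • (1 : Matrix n n ℂ) := by
  ext i j; by_cases h : i = j <;> simp [h, Matrix.diagonal, Matrix.one_apply]

lemma my_conj_pow (W B : Matrix n n ℂ) (hW : W * Wᴴ = 1) (hW' : Wᴴ * W = 1) (k : ℕ) :
    (W * B * Wᴴ) ^ k = W * B ^ k * Wᴴ := by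
  induction k with
  | zero => simp [← Matrix.mul_assoc, hW]
  | succ k ih =>
      rw [pow_succ, ih, pow_succ]
      have h3 : Wᴴ * (W * B * Wᴴ) = B * Wᴴ := by
        rw [← Matrix.mul_assoc, ← Matrix.mul_assoc, hW', Matrix.one_mul]
      rw [Matrix.mul_assoc (W * B ^ k) Wᴴ, h3, ← Matrix.mul_assoc, ← Matrix.mul_assoc]

lemma my_aeval_conj (W B : Matrix n n ℂ) (hW : W * Wᴴ = 1) (hW' : Wᴴ * W = 1) (p : ℂ[X]) :
    (Polynomial.aeval (W * B * Wᴴ) p : Matrix n n ℂ) = W * Polynomial.aeval B p * Wᴴ := by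
  induction p using Polynomial.induction_on with
  | C a =>
      simp only [Polynomial.aeval_C, Matrix.algebraMap_eq_diagonal, diag_const_smul]
      rw [Matrix.mul_smul, Matrix.smul_mul, Matrix.mul_one, hW]
  | add p q hp hq => simp [map_add, hp, hq, Matrix.mul_add, Matrix.add_mul]
  | monomial k a ih =>
      simp only [_root_.map_mul, map_pow, Polynomial.aeval_C, Polynomial.aeval_X,
        Matrix.algebraMap_eq_diagonal, diag_const_smul, my_conj_pow W B hW hW']
      simp [Matrix.smul_mul, Matrix.mul_smul]

lemma my_aeval_diag (d : n → ℂ) (p : ℂ[X]) :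
    (Polynomial.aeval (Matrix.diagonal d) p : Matrix n n ℂ)
      = Matrix.diagonal (fun i => p.eval (d i)) := by
  induction p using Polynomial.induction_on with
  | C a => simp [Matrix.algebraMap_eq_diagonal]
  | add p q hp hq => simp [map_add, hp, hq, Matrix.diagonal_add]
  | monomial k a ih =>
      simp [_root_.map_mul, map_pow, Matrix.diagonal_pow, Matrix.algebraMap_eq_diagonal,
        Matrix.diagonal_mul_diagonal]

lemma mlog_spec (W : Matrix n n ℂ) (hW : W ∈ Matrix.unitaryGroup n ℂ) (d : n → ℝ) :
    mlog (W * Matrix.diagonal (fun i => (d i : ℂ)) * Wᴴ)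
      = W * Matrix.diagonal (fun i => (Real.log (d i) : ℂ)) * Wᴴ := by
  have hW1 : W * Wᴴ = 1 := by
    rw [← Matrix.star_eq_conjTranspose]; exact mem_unitaryGroup_iff.mp hW
  have hW2 : Wᴴ * W = 1 := by
    rw [← Matrix.star_eq_conjTranspose]; exact mem_unitaryGroup_iff'.mp hW
  set A := W * Matrix.diagonal (fun i => (d i : ℂ)) * Wᴴ with hAdef
  have hA : A.IsHermitian := by
    apply Matrix.isHermitian_mul_mul_conjTranspose
    exact Matrix.isHermitian_diagonal_iff.mpr fun i => Complex.conj_ofReal _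
  set V : Matrix n n ℂ := (hA.eigenvectorUnitary : Matrix n n ℂ) with hVdef
  have hV1 : V * Vᴴ = 1 := by
    rw [← Matrix.star_eq_conjTranspose]
    exact mem_unitaryGroup_iff.mp hA.eigenvectorUnitary.2
  have hV2 : Vᴴ * V = 1 := by
    rw [← Matrix.star_eq_conjTranspose]
    exact mem_unitaryGroup_iff'.mp hA.eigenvectorUnitary.2
  have hspec : A = V * Matrix.diagonal (fun i => ((hA.eigenvalues i : ℝ) : ℂ)) * Vᴴ := by
    have := hA.spectral_theorem
    rw [Unitary.conjStarAlgAut_apply, Matrix.star_eq_conjTranspose] at this; exact this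
  have hmlog : mlog A = V * Matrix.diagonal (fun i => (Real.log (hA.eigenvalues i) : ℂ)) * Vᴴ := by
    rw [mlog, dif_pos hA]
    rfl
  -- interpolation polynomial
  classical
  set s : Finset ℂ := (Finset.univ.image fun i => ((d i : ℝ) : ℂ)) ∪
      (Finset.univ.image fun i => ((hA.eigenvalues i : ℝ) : ℂ)) with hsdef
  set p : ℂ[X] := Lagrange.interpolate s id (fun z => (Real.log z.re : ℂ)) with hpdef
  have hinj : Set.InjOn id (s : Set ℂ) := Function.injective_id.injOn
  have hpe : ∀ x ∈ s, p.eval x = (Real.log x.re : ℂ) := by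
    intro x hx
    have := Lagrange.eval_interpolate_at_node (v := id) (r := fun z => (Real.log z.re : ℂ))
      hinj hx
    rw [hpdef]; simpa using this
  have h1 : (Polynomial.aeval A p : Matrix n n ℂ)
      = W * Matrix.diagonal (fun i => (Real.log (d i) : ℂ)) * Wᴴ := by
    rw [hAdef, my_aeval_conj W _ hW1 hW2, my_aeval_diag]
    have he : (fun i => p.eval ((d i : ℝ) : ℂ)) = fun i => (Real.log (d i) : ℂ) := by
      funext i
      rw [hpe _ (Finset.mem_union_left _ (Finset.mem_image_of_mem _ (Finset.mem_univ i)))]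
      simp
    rw [he]
  have h2 : (Polynomial.aeval A p : Matrix n n ℂ) = mlog A := by
    conv_lhs => rw [hspec]
    rw [my_aeval_conj V _ hV1 hV2, my_aeval_diag, hmlog]
    have he : (fun i => p.eval ((hA.eigenvalues i : ℝ) : ℂ))
        = fun i => (Real.log (hA.eigenvalues i) : ℂ) := by
      funext i
      rw [hpe _ (Finset.mem_union_right _ (Finset.mem_image_of_mem _ (Finset.mem_univ i)))]
      simp
    rw [he]
  rw [← h2, h1]


lemma trace_conj_unitary (W A : Matrix n n ℂ) (hW' : Wᴴ * W = 1) :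
    Matrix.trace (W * A * Wᴴ) = Matrix.trace A := by
  rw [Matrix.trace_mul_cycle, hW', Matrix.one_mul]

lemma posDef_conj_unitary {A : Matrix n n ℂ} (hA : A.PosDef) {W : Matrix n n ℂ}
    (hW : W ∈ Matrix.unitaryGroup n ℂ) : (W * A * Wᴴ).PosDef := by
  have hW2 : Wᴴ * W = 1 := by
    rw [← Matrix.star_eq_conjTranspose]; exact Matrix.mem_unitaryGroup_iff'.mp hW
  refine Matrix.PosDef.of_dotProduct_mulVec_pos (Matrix.isHermitian_mul_mul_conjTranspose _ hA.1) fun x hx => ?_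
  have hx' : Wᴴ *ᵥ x ≠ 0 := by
    intro h
    have : W *ᵥ (Wᴴ *ᵥ x) = 0 := by rw [h, Matrix.mulVec_zero]
    rw [Matrix.mulVec_mulVec] at this
    have hWW : W * Wᴴ = 1 := by
      rw [← Matrix.star_eq_conjTranspose]; exact Matrix.mem_unitaryGroup_iff.mp hW
    rw [hWW, Matrix.one_mulVec] at this
    exact hx this
  have key : star x ⬝ᵥ ((W * A * Wᴴ) *ᵥ x)
      = star (Wᴴ *ᵥ x) ⬝ᵥ (A *ᵥ (Wᴴ *ᵥ x)) := by
    calc star x ⬝ᵥ ((W * A * Wᴴ) *ᵥ x)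
        = star x ⬝ᵥ (W *ᵥ (A *ᵥ (Wᴴ *ᵥ x))) := by
          rw [← Matrix.mulVec_mulVec, ← Matrix.mulVec_mulVec]
      _ = (star x ᵥ* W) ⬝ᵥ (A *ᵥ (Wᴴ *ᵥ x)) := Matrix.dotProduct_mulVec _ _ _
      _ = star (Wᴴ *ᵥ x) ⬝ᵥ (A *ᵥ (Wᴴ *ᵥ x)) := by
          rw [Matrix.star_mulVec, Matrix.conjTranspose_conjTranspose]
  rw [key]
  exact hA.dotProduct_mulVec_pos hx'

lemma conjTranspose_kron {m : Type*} [Fintype m] [DecidableEq m]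
    (A : Matrix n n ℂ) (B : Matrix m m ℂ) :
    (A ⊗ₖ B)ᴴ = Aᴴ ⊗ₖ Bᴴ := by
  ext ⟨i, k⟩ ⟨j, l⟩
  simp [Matrix.conjTranspose_apply, Matrix.kroneckerMap_apply, mul_comm]

lemma conj_mul_conj (U A B : Matrix n n ℂ) (hU2 : Uᴴ * U = 1) :
    (U * A * Uᴴ) * (U * B * Uᴴ) = U * (A * B) * Uᴴ := by
  have h : Uᴴ * (U * B * Uᴴ) = B * Uᴴ := by
    rw [← Matrix.mul_assoc, ← Matrix.mul_assoc, hU2, Matrix.one_mul]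
  rw [Matrix.mul_assoc (U * A) Uᴴ (U * B * Uᴴ), h]
  noncomm_ring

end auxlem

section ptracelem
variable {dS dR : ℕ}

lemma trace_mul_kron_one (M : Matrix (Fin dS × Fin dR) (Fin dS × Fin dR) ℂ)
    (X : Matrix (Fin dS) (Fin dS) ℂ) :
    Matrix.trace (M * (X ⊗ₖ (1 : Matrix (Fin dR) (Fin dR) ℂ)))
      = Matrix.trace (ptraceR M * X) := by
  simp only [Matrix.trace, Matrix.diag, Matrix.mul_apply, ptraceR, Matrix.of_apply,
    Matrix.kroneckerMap_apply, Matrix.one_apply, Fintype.sum_prod_type,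
    mul_ite, mul_one, mul_zero, Finset.sum_ite_eq', Finset.mem_univ, if_true,
    Finset.sum_mul]
  exact Finset.sum_congr rfl fun i _ => Finset.sum_comm

lemma trace_mul_one_kron (M : Matrix (Fin dS × Fin dR) (Fin dS × Fin dR) ℂ)
    (Y : Matrix (Fin dR) (Fin dR) ℂ) :
    Matrix.trace (M * ((1 : Matrix (Fin dS) (Fin dS) ℂ) ⊗ₖ Y))
      = Matrix.trace (ptraceS M * Y) := by
  simp only [Matrix.trace, Matrix.diag, Matrix.mul_apply, ptraceS, Matrix.of_apply,
    Matrix.kroneckerMap_apply, Matrix.one_apply, Fintype.sum_prod_type,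
    ite_mul, one_mul, zero_mul, mul_ite, mul_one, mul_zero,
    Finset.sum_ite_eq', Finset.mem_univ, if_true, Finset.sum_mul]
  have step : ∀ i : Fin dS, ∑ k : Fin dR, ∑ j : Fin dS, ∑ l : Fin dR,
      (if j = i then M (i, k) (j, l) * Y l k else 0)
      = ∑ k : Fin dR, ∑ l : Fin dR, M (i, k) (i, l) * Y l k := by
    intro i
    refine Finset.sum_congr rfl fun k _ => ?_
    rw [Finset.sum_comm]
    simp [Finset.sum_ite_eq']
  rw [Finset.sum_congr rfl fun i _ => step i, Finset.sum_comm]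
  exact Finset.sum_congr rfl fun k _ => Finset.sum_comm

lemma trace_ptraceR (M : Matrix (Fin dS × Fin dR) (Fin dS × Fin dR) ℂ) :
    Matrix.trace (ptraceR M) = Matrix.trace M := by
  simp [Matrix.trace, ptraceR, Matrix.diag, Fintype.sum_prod_type]

lemma trace_ptraceS (M : Matrix (Fin dS × Fin dR) (Fin dS × Fin dR) ℂ) :
    Matrix.trace (ptraceS M) = Matrix.trace M := by
  rw [Matrix.trace, Matrix.trace, Fintype.sum_prod_type, Finset.sum_comm]
  simp [ptraceS, Matrix.diag]

lemma ptraceR_posDef (hdR : 0 < dR) {M : Matrix (Fin dS × Fin dR) (Fin dS × Fin dR) ℂ}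
    (hM : M.PosDef) : (ptraceR M).PosDef := by
  haveI : Nonempty (Fin dR) := ⟨⟨0, hdR⟩⟩
  rw [Matrix.posDef_iff_dotProduct_mulVec]
  constructor
  · ext i j
    simp only [Matrix.conjTranspose_apply, ptraceR, Matrix.of_apply, star_sum]
    exact Finset.sum_congr rfl fun k _ => hM.1.apply (i, k) (j, k)
  · intro x hx
    set f : Fin dR → (Fin dS × Fin dR → ℂ) := fun k p => if p.2 = k then x p.1 else 0 with hf
    have key : star x ⬝ᵥ (ptraceR M *ᵥ x) = ∑ k, star (f k) ⬝ᵥ (M *ᵥ f k) := by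
      simp only [dotProduct, Matrix.mulVec, Pi.star_apply, ptraceR, Matrix.of_apply,
        hf, Fintype.sum_prod_type, star_zero, ite_mul, zero_mul, mul_ite, mul_zero,
        Finset.sum_ite_eq', Finset.mem_univ, if_true, Finset.sum_mul, Finset.mul_sum]
      have step : ∀ k : Fin dR, (∑ i : Fin dS, ∑ l : Fin dR, ∑ j : Fin dS,
          star (if l = k then x i else 0) * (M (i, l) (j, k) * x j))
          = ∑ i : Fin dS, ∑ j : Fin dS, star (x i) * (M (i, k) (j, k) * x j) := by
        intro k
        refine Finset.sum_congr rfl fun i _ => ?_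
        simp [apply_ite (star : ℂ → ℂ), ite_mul, zero_mul, Finset.sum_ite_eq']
      rw [Finset.sum_congr rfl fun k (_ : k ∈ Finset.univ) => step k]
      conv_rhs => rw [Finset.sum_comm]
      exact Finset.sum_congr rfl fun i _ => Finset.sum_comm
    rw [key]
    have hfne : ∀ k, f k ≠ 0 := by
      intro k hk
      obtain ⟨i, hi⟩ := Function.ne_iff.mp hx
      exact hi (by simpa [hf] using congrFun hk (i, k))
    exact Finset.sum_pos (fun k _ => hM.dotProduct_mulVec_pos (hfne k)) Finset.univ_nonempty

end ptracelem

section mloglem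
variable {m n : Type*} [Fintype n] [DecidableEq n] [Fintype m] [DecidableEq m]

lemma kron_unitary {V : Matrix n n ℂ} {W : Matrix m m ℂ}
    (hV : V ∈ Matrix.unitaryGroup n ℂ) (hW : W ∈ Matrix.unitaryGroup m ℂ) :
    V ⊗ₖ W ∈ Matrix.unitaryGroup (n × m) ℂ := by
  rw [Matrix.mem_unitaryGroup_iff, Matrix.star_eq_conjTranspose, conjTranspose_kron,
    ← Matrix.mul_kronecker_mul]
  have h1 : V * Vᴴ = 1 := by
    rw [← Matrix.star_eq_conjTranspose]; exact Matrix.mem_unitaryGroup_iff.mp hV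
  have h2 : W * Wᴴ = 1 := by
    rw [← Matrix.star_eq_conjTranspose]; exact Matrix.mem_unitaryGroup_iff.mp hW
  rw [h1, h2, Matrix.one_kronecker_one]

lemma unitary_conj_kron_diag (V : Matrix n n ℂ) (W : Matrix m m ℂ)
    (a : n → ℂ) (b : m → ℂ) :
    (V * Matrix.diagonal a * Vᴴ) ⊗ₖ (W * Matrix.diagonal b * Wᴴ)
      = (V ⊗ₖ W) * Matrix.diagonal (fun p : n × m => a p.1 * b p.2) * (V ⊗ₖ W)ᴴ := by
  rw [Matrix.mul_kronecker_mul, Matrix.mul_kronecker_mul, Matrix.diagonal_kronecker_diagonal,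
    ← conjTranspose_kron]

/-- spectral decomposition of a PosDef matrix with positive diagonal entries -/
lemma posdef_decomp {A : Matrix n n ℂ} (hA : A.PosDef) :
    ∃ (V : Matrix n n ℂ) (a : n → ℝ), V ∈ Matrix.unitaryGroup n ℂ ∧ (∀ i, 0 < a i) ∧
      A = V * Matrix.diagonal (fun i => (a i : ℂ)) * Vᴴ ∧
      mlog A = V * Matrix.diagonal (fun i => (Real.log (a i) : ℂ)) * Vᴴ := by
  refine ⟨hA.1.eigenvectorUnitary, hA.1.eigenvalues, hA.1.eigenvectorUnitary.2,
    hA.eigenvalues_pos, ?_, ?_⟩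
  · have := hA.1.spectral_theorem
    rw [Unitary.conjStarAlgAut_apply, Matrix.star_eq_conjTranspose] at this; exact this
  · have hs := hA.1.spectral_theorem
    rw [Unitary.conjStarAlgAut_apply, Matrix.star_eq_conjTranspose] at hs
    conv_lhs => rw [hs]
    exact mlog_spec _ hA.1.eigenvectorUnitary.2 _

lemma mlog_kron {A : Matrix n n ℂ} {B : Matrix m m ℂ} (hA : A.PosDef) (hB : B.PosDef) :
    mlog (A ⊗ₖ B) = mlog A ⊗ₖ (1 : Matrix m m ℂ) + (1 : Matrix n n ℂ) ⊗ₖ mlog B := by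
  obtain ⟨V, a, hV, ha, hAeq, hAlog⟩ := posdef_decomp hA
  obtain ⟨W, b, hW, hb, hBeq, hBlog⟩ := posdef_decomp hB
  have hkron : A ⊗ₖ B = (V ⊗ₖ W) *
      Matrix.diagonal (fun p : n × m => ((a p.1 * b p.2 : ℝ) : ℂ)) * (V ⊗ₖ W)ᴴ := by
    rw [hAeq, hBeq, unitary_conj_kron_diag]
    congr 2
    funext p
    push_cast
    ring
  rw [hkron, mlog_spec _ (kron_unitary hV hW)]
  have hlogsplit : (fun p : n × m => ((Real.log (a p.1 * b p.2) : ℝ) : ℂ))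
      = fun p : n × m => ((Real.log (a p.1) : ℂ) + (Real.log (b p.2) : ℂ)) := by
    funext p
    rw [Real.log_mul (ha p.1).ne' (hb p.2).ne']
    push_cast
    ring
  rw [hlogsplit]
  have hdsplit : Matrix.diagonal (fun p : n × m => ((Real.log (a p.1) : ℂ) + (Real.log (b p.2) : ℂ)))
      = Matrix.diagonal (fun i => (Real.log (a i) : ℂ)) ⊗ₖ (1 : Matrix m m ℂ)
        + (1 : Matrix n n ℂ) ⊗ₖ Matrix.diagonal (fun k => (Real.log (b k) : ℂ)) := by
    rw [← Matrix.diagonal_one, ← Matrix.diagonal_one, Matrix.diagonal_kronecker_diagonal,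
      Matrix.diagonal_kronecker_diagonal, ← Matrix.diagonal_add]
    congr 1
    · congr 1
      funext p
      simp
    · congr 1
      funext p
      simp
  rw [hdsplit, Matrix.mul_add, Matrix.add_mul]
  congr 1
  · have hW1 : W * Wᴴ = 1 := by
      rw [← Matrix.star_eq_conjTranspose]; exact Matrix.mem_unitaryGroup_iff.mp hW
    rw [hAlog, conjTranspose_kron, ← Matrix.mul_kronecker_mul, ← Matrix.mul_kronecker_mul,
      Matrix.mul_one, hW1]
  · have hV1 : V * Vᴴ = 1 := by
      rw [← Matrix.star_eq_conjTranspose]; exact Matrix.mem_unitaryGroup_iff.mp hV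
    rw [hBlog, conjTranspose_kron, ← Matrix.mul_kronecker_mul, ← Matrix.mul_kronecker_mul,
      Matrix.mul_one, hV1]

lemma mlog_conj_unitary {A : Matrix n n ℂ} (hA : A.PosDef) {U : Matrix n n ℂ}
    (hU : U ∈ Matrix.unitaryGroup n ℂ) :
    mlog (U * A * Uᴴ) = U * mlog A * Uᴴ := by
  obtain ⟨V, a, hV, ha, hAeq, hAlog⟩ := posdef_decomp hA
  have h1 : U * A * Uᴴ = (U * V) * Matrix.diagonal (fun i => ((a i : ℝ) : ℂ)) * (U * V)ᴴ := by
    rw [hAeq, Matrix.conjTranspose_mul]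
    noncomm_ring
  rw [h1, mlog_spec _ (mul_mem hU hV), hAlog, Matrix.conjTranspose_mul]
  noncomm_ring

lemma posDef_kron {A : Matrix n n ℂ} {B : Matrix m m ℂ} (hA : A.PosDef) (hB : B.PosDef) :
    (A ⊗ₖ B).PosDef := by
  obtain ⟨V, a, hV, ha, hAeq, -⟩ := posdef_decomp hA
  obtain ⟨W, b, hW, hb, hBeq, -⟩ := posdef_decomp hB
  have hkron : A ⊗ₖ B = (V ⊗ₖ W) *
      Matrix.diagonal (fun p : n × m => ((a p.1 : ℂ) * (b p.2 : ℂ))) * (V ⊗ₖ W)ᴴ := by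
    rw [hAeq, hBeq, unitary_conj_kron_diag]
  rw [hkron]
  refine posDef_conj_unitary (Matrix.PosDef.diagonal fun p => ?_) (kron_unitary hV hW)
  rw [← Complex.ofReal_mul]
  exact_mod_cast mul_pos (ha p.1) (hb p.2)

end mloglem

section gibbslem

lemma gibbs_decomp {dR : ℕ} (hdR : 0 < dR) (β : ℝ) {HR : Matrix (Fin dR) (Fin dR) ℂ}
    (hHR : HR.IsHermitian) :
    ∃ Z : ℝ, 0 < Z ∧ (gibbs β HR).PosDef ∧ (gibbs β HR).trace = 1 ∧
      mlog (gibbs β HR) = (-(β : ℂ)) • HR - ((Real.log Z : ℝ) : ℂ) • (1 : Matrix (Fin dR) (Fin dR) ℂ) := by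
  haveI : Nonempty (Fin dR) := ⟨⟨0, hdR⟩⟩
  set V : Matrix (Fin dR) (Fin dR) ℂ := (hHR.eigenvectorUnitary : Matrix (Fin dR) (Fin dR) ℂ) with hVdef
  set h : Fin dR → ℝ := hHR.eigenvalues with hhdef
  have hV : V ∈ Matrix.unitaryGroup (Fin dR) ℂ := hHR.eigenvectorUnitary.2
  have hV1 : V * Vᴴ = 1 := by
    rw [← Matrix.star_eq_conjTranspose]; exact Matrix.mem_unitaryGroup_iff.mp hV
  have hV2 : Vᴴ * V = 1 := by
    rw [← Matrix.star_eq_conjTranspose]; exact Matrix.mem_unitaryGroup_iff'.mp hV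
  have hs : HR = V * Matrix.diagonal (fun k => ((h k : ℝ) : ℂ)) * Vᴴ := by
    have := hHR.spectral_theorem
    rw [Unitary.conjStarAlgAut_apply, Matrix.star_eq_conjTranspose] at this; exact this
  have hVunit : IsUnit V := ⟨⟨V, Vᴴ, hV1, hV2⟩, rfl⟩
  have hVinv : V⁻¹ = Vᴴ := Matrix.inv_eq_right_inv hV1
  have step1 : (-(β : ℂ)) • HR = V * Matrix.diagonal (fun k => ((-β * h k : ℝ) : ℂ)) * Vᴴ := by
    conv_lhs => rw [hs]
    rw [← Matrix.smul_mul, ← Matrix.mul_smul, ← Matrix.diagonal_smul]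
    have he : ((-(β : ℂ)) • fun k => ((h k : ℝ) : ℂ)) = fun k => ((-β * h k : ℝ) : ℂ) := by
      funext k
      simp only [Pi.smul_apply, smul_eq_mul]
      push_cast
      ring
    rw [he]
  have step2 : NormedSpace.exp ((-(β : ℂ)) • HR)
      = V * Matrix.diagonal (fun k => ((Real.exp (-β * h k) : ℝ) : ℂ)) * Vᴴ := by
    rw [step1, ← hVinv, Matrix.exp_conj _ _ hVunit, Matrix.exp_diagonal, hVinv]
    have he : (NormedSpace.exp fun k => ((-β * h k : ℝ) : ℂ))
        = fun k => ((Real.exp (-β * h k) : ℝ) : ℂ) := by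
      rw [Pi.exp_def]
      funext k
      rw [← Complex.exp_eq_exp_ℂ, ← Complex.ofReal_exp]
    rw [he]
  set Z : ℝ := ∑ k, Real.exp (-β * h k) with hZdef
  have hZ : 0 < Z := Finset.sum_pos (fun k _ => Real.exp_pos _) Finset.univ_nonempty
  have step3 : Matrix.trace (NormedSpace.exp ((-(β : ℂ)) • HR)) = (Z : ℂ) := by
    rw [step2, trace_conj_unitary _ _ hV2, Matrix.trace_diagonal, hZdef]
    norm_cast
  have step4 : gibbs β HR
      = V * Matrix.diagonal (fun k => ((Real.exp (-β * h k) / Z : ℝ) : ℂ)) * Vᴴ := by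
    rw [gibbs, step3, step2, ← Matrix.smul_mul, ← Matrix.mul_smul, ← Matrix.diagonal_smul]
    have he : ((Z : ℂ))⁻¹ • (fun k => ((Real.exp (-β * h k) : ℝ) : ℂ))
        = fun k => ((Real.exp (-β * h k) / Z : ℝ) : ℂ) := by
      funext k
      simp only [Pi.smul_apply, smul_eq_mul]
      push_cast
      field_simp
    rw [he]
  refine ⟨Z, hZ, ?_, ?_, ?_⟩
  · rw [step4]
    refine posDef_conj_unitary (Matrix.PosDef.diagonal fun k => ?_) hV
    exact_mod_cast div_pos (Real.exp_pos _) hZ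
  · rw [step4, trace_conj_unitary _ _ hV2, Matrix.trace_diagonal]
    rw [← Complex.ofReal_sum, ← Finset.sum_div, ← hZdef, div_self hZ.ne']
    exact Complex.ofReal_one
  · rw [step4, mlog_spec _ hV]
    have hd : Matrix.diagonal (fun k => ((Real.log (Real.exp (-β * h k) / Z) : ℝ) : ℂ))
        = (-(β : ℂ)) • Matrix.diagonal (fun k => ((h k : ℝ) : ℂ))
          - ((Real.log Z : ℝ) : ℂ) • (1 : Matrix (Fin dR) (Fin dR) ℂ) := by
      have he : (fun k => ((Real.log (Real.exp (-β * h k) / Z) : ℝ) : ℂ))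
          = fun k => (-(β : ℂ)) * ((h k : ℝ) : ℂ) - ((Real.log Z : ℝ) : ℂ) := by
        funext k
        rw [Real.log_div (Real.exp_pos _).ne' hZ.ne', Real.log_exp]
        push_cast
        ring
      rw [he]
      ext i j
      by_cases hij : i = j
      · subst hij
        simp [Matrix.sub_apply, Matrix.smul_apply, Matrix.diagonal_apply_eq,
          Matrix.one_apply_eq, smul_eq_mul, mul_one]
      · simp [Matrix.sub_apply, Matrix.smul_apply, Matrix.diagonal_apply_ne _ hij,
          Matrix.one_apply_ne hij]
    rw [hd, Matrix.mul_sub, Matrix.sub_mul, Matrix.mul_smul, Matrix.smul_mul,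
      Matrix.mul_smul, Matrix.smul_mul, Matrix.mul_one, hV1]
    congr 1
    rw [← hs]

end gibbslem

/-- **Entropy balance equation for a confined reservoir.**
The decrease of system entropy `ΔS = S(ρ_i) - S(ρ_U)`, the entropy production
`σ = S(ω_U | ρ_U ⊗ ν_i)` and the reservoir energy increase
`ΔQ = tr(ν_U H_R) - tr(ν_i H_R)` satisfy `ΔS + σ = β ΔQ`. -/
theorem entropy_balance_confined {dS dR : ℕ} (hdR : 0 < dR)
    (β : ℝ) (hβ : 0 < β)
    (HR : Matrix (Fin dR) (Fin dR) ℂ) (hHR : HR.IsHermitian)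
    (ρi : Matrix (Fin dS) (Fin dS) ℂ) (hρi : ρi.PosDef) (hρitr : ρi.trace = 1)
    (U : Matrix (Fin dS × Fin dR) (Fin dS × Fin dR) ℂ)
    (hU : U ∈ Matrix.unitaryGroup (Fin dS × Fin dR) ℂ) :
    let νi := gibbs β HR
    let ωU := U * (ρi ⊗ₖ νi) * Uᴴ
    let ρU := ptraceR ωU
    let νU := ptraceS ωU
    (vnEnt ρi - vnEnt ρU) + relEnt ωU (ρU ⊗ₖ νi)
      = β * ((Matrix.trace (νU * HR)).re - (Matrix.trace (νi * HR)).re) := by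
  intro νi ωU ρU νU
  obtain ⟨Z, hZ, hνpd0, hνtr0, hνlog0⟩ := gibbs_decomp hdR β hHR
  have hνdef : νi = gibbs β HR := rfl
  have hωdef : ωU = U * (ρi ⊗ₖ νi) * Uᴴ := rfl
  have hρUdef : ρU = ptraceR ωU := rfl
  have hνUdef : νU = ptraceS ωU := rfl
  have hνpd : νi.PosDef := by rw [hνdef]; exact hνpd0
  have hνtr : νi.trace = 1 := by rw [hνdef]; exact hνtr0
  have hνlog : mlog νi = (-(β : ℂ)) • HR - ((Real.log Z : ℝ) : ℂ) • 1 := by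
    rw [hνdef]; exact hνlog0
  have hU1 : U * Uᴴ = 1 := by
    rw [← Matrix.star_eq_conjTranspose]; exact Matrix.mem_unitaryGroup_iff.mp hU
  have hU2 : Uᴴ * U = 1 := by
    rw [← Matrix.star_eq_conjTranspose]; exact Matrix.mem_unitaryGroup_iff'.mp hU
  have hkronpd : (ρi ⊗ₖ νi).PosDef := posDef_kron hρi hνpd
  have hωpd : ωU.PosDef := posDef_conj_unitary hkronpd hU
  have hρUpd : ρU.PosDef := ptraceR_posDef hdR hωpd
  have hωtr : ωU.trace = 1 := by
    rw [hωdef, trace_conj_unitary _ _ hU2, Matrix.trace_kronecker, hρitr, hνtr, mul_one]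
  have hνUtr : νU.trace = 1 := by rw [hνUdef, trace_ptraceS, hωtr]
  have hmlogω : mlog ωU
      = U * (mlog ρi ⊗ₖ (1 : Matrix (Fin dR) (Fin dR) ℂ)
          + (1 : Matrix (Fin dS) (Fin dS) ℂ) ⊗ₖ mlog νi) * Uᴴ := by
    rw [hωdef, mlog_conj_unitary hkronpd hU, mlog_kron hρi hνpd]
  have hsplit : ∀ (X : Matrix (Fin dS) (Fin dS) ℂ) (Y : Matrix (Fin dR) (Fin dR) ℂ),
      Matrix.trace ((ρi ⊗ₖ νi) * (X ⊗ₖ (1 : Matrix (Fin dR) (Fin dR) ℂ)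
        + (1 : Matrix (Fin dS) (Fin dS) ℂ) ⊗ₖ Y))
      = Matrix.trace (ρi * X) * Matrix.trace νi
        + Matrix.trace ρi * Matrix.trace (νi * Y) := by
    intro X Y
    rw [Matrix.mul_add, Matrix.trace_add, ← Matrix.mul_kronecker_mul,
      ← Matrix.mul_kronecker_mul, Matrix.mul_one, Matrix.mul_one,
      Matrix.trace_kronecker, Matrix.trace_kronecker]
  have hT1 : Matrix.trace (ωU * mlog ωU)
      = Matrix.trace (ρi * mlog ρi) + Matrix.trace (νi * mlog νi) := by
    rw [hmlogω]
    conv_lhs => rw [hωdef]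
    rw [conj_mul_conj U _ _ hU2, trace_conj_unitary _ _ hU2, hsplit, hρitr, hνtr,
      mul_one, one_mul]
  have hT2a : Matrix.trace (ωU * (mlog ρU ⊗ₖ (1 : Matrix (Fin dR) (Fin dR) ℂ)))
      = Matrix.trace (ρU * mlog ρU) := trace_mul_kron_one ωU (mlog ρU)
  have hT2b : Matrix.trace (ωU * ((1 : Matrix (Fin dS) (Fin dS) ℂ) ⊗ₖ mlog νi))
      = Matrix.trace (νU * mlog νi) := trace_mul_one_kron ωU (mlog νi)
  have hmlogkr : mlog (ρU ⊗ₖ νi)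
      = mlog ρU ⊗ₖ (1 : Matrix (Fin dR) (Fin dR) ℂ)
        + (1 : Matrix (Fin dS) (Fin dS) ℂ) ⊗ₖ mlog νi := mlog_kron hρUpd hνpd
  have hLν : ∀ N : Matrix (Fin dR) (Fin dR) ℂ, Matrix.trace (N * mlog νi)
      = -(β : ℂ) * Matrix.trace (N * HR) - ((Real.log Z : ℝ) : ℂ) * Matrix.trace N := by
    intro N
    rw [hνlog, Matrix.mul_sub, Matrix.trace_sub, Matrix.mul_smul, Matrix.trace_smul,
      Matrix.mul_smul, Matrix.mul_one, Matrix.trace_smul, smul_eq_mul, smul_eq_mul]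
  have Hc : Matrix.trace (ρU * mlog ρU) - Matrix.trace (ρi * mlog ρi)
      + Matrix.trace (ωU * (mlog ωU - mlog (ρU ⊗ₖ νi)))
      = (β : ℂ) * (Matrix.trace (νU * HR) - Matrix.trace (νi * HR)) := by
    rw [Matrix.mul_sub, Matrix.trace_sub, hT1, hmlogkr, Matrix.mul_add, Matrix.trace_add,
      hT2a, hT2b, hLν, hLν, hνtr, hνUtr]
    ring
  have hre := congrArg Complex.re Hc
  simp only [Complex.sub_re, Complex.add_re, Complex.re_ofReal_mul] at hre
  simp only [vnEnt, relEnt]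
  linarith [hre]
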